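/- For the trigonal bipyramid vertices p₁,…,p₅ and every unit vector u = (u₁,u₂,u₃) ∈ ℝ³, the vector γ(u) = T⁻¹Xᵀb(u), where b(u)ᵢ = uᵀBᵢu, equals ((u₂² − u₁²)/2, u₁u₂, 0). -/
import Mathlib
set_option maxHeartbeats 2000000


open Matrix

/-- The five vertices of the trigonal bipyramid `BP`, as rows of the `5 × 3` matrix `X`. -/
noncomputable def bpv (h : ℝ) : Fin 5 → Fin 3 → ℝ :=
  ![![0, 0, h], ![0, 0, -h], ![1, 0, 0], ![-(1/2), Real.sqrt 3 / 2, 0],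
    ![-(1/2), -(Real.sqrt 3 / 2), 0]]

/-- `Bᵢ = tr(Vᵢ − V)·I₃ − (Vᵢ − V)` where `Vᵢ = xᵢxᵢᵀ` and `V = (Σⱼ xⱼxⱼᵀ)/5`. -/
noncomputable def Bmat (x : Fin 5 → Fin 3 → ℝ) (i : Fin 5) : Matrix (Fin 3) (Fin 3) ℝ :=
  (vecMulVec (x i) (x i) - (5 : ℝ)⁻¹ • ∑ j, vecMulVec (x j) (x j)).trace •
      (1 : Matrix (Fin 3) (Fin 3) ℝ)
    - (vecMulVec (x i) (x i) - (5 : ℝ)⁻¹ • ∑ j, vecMulVec (x j) (x j))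

/-- `b(u) ∈ ℝ⁵` with `b(u)ᵢ = uᵀBᵢu`. -/
noncomputable def bvec (x : Fin 5 → Fin 3 → ℝ) (u : Fin 3 → ℝ) : Fin 5 → ℝ :=
  fun i => u ⬝ᵥ (Bmat x i *ᵥ u)

/-- `γ(u) = T⁻¹ Xᵀ b(u)` where `T = XᵀX`. -/
noncomputable def gammaVec (x : Fin 5 → Fin 3 → ℝ) (u : Fin 3 → ℝ) : Fin 3 → ℝ :=
  ((Matrix.of x)ᵀ * Matrix.of x)⁻¹ *ᵥ ((Matrix.of x)ᵀ *ᵥ bvec x u)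

/-- For the trigonal bipyramid vertices and any unit vector `u`,
`γ(u) = ((u₂² − u₁²)/2, u₁u₂, 0)`. -/
theorem bipyramid_gamma (h : ℝ) (h0 : 0 < h) (u : Fin 3 → ℝ) (hu : u ⬝ᵥ u = 1) :
    gammaVec (bpv h) u = ![(u 1 ^ 2 - u 0 ^ 2) / 2, u 0 * u 1, 0] := by
  have hs3 : Real.sqrt 3 ^ 2 = 3 := Real.sq_sqrt (by norm_num)
  set X := Matrix.of (bpv h) with hX
  have hT : Xᵀ * X = Matrix.diagonal ![3/2, 3/2, 2*h^2] := by
    ext i j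
    fin_cases i <;> fin_cases j <;>
      simp [hX, bpv, Matrix.mul_apply, Matrix.transpose_apply, Fin.sum_univ_five,
        Matrix.diagonal, Matrix.vecHead, Matrix.vecTail, Function.comp] <;>
      nlinarith [hs3]
  have hdet : (Xᵀ * X).det ≠ 0 := by
    rw [hT, Matrix.det_diagonal]
    simp [Fin.prod_univ_three]
    positivity
  have key : (Xᵀ * X) *ᵥ ![(u 1 ^ 2 - u 0 ^ 2) / 2, u 0 * u 1, 0]
      = Xᵀ *ᵥ bvec (bpv h) u := by
    ext i
    rw [hT]
    fin_cases i <;>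
      simp [hX, bvec, Bmat, bpv, Matrix.mulVec, Matrix.vecMulVec_apply, dotProduct,
        Matrix.trace, Matrix.diag, Matrix.transpose_apply, Matrix.vecHead, Matrix.vecTail,
        Function.comp, Fin.sum_univ_five, Fin.sum_univ_three,
        Matrix.one_apply, Matrix.diagonal]
    · linear_combination (-(u 1 ^ 2) / 4 + (u 0 ^ 2 + u 1 ^ 2 + u 2 ^ 2) / 4) * hs3
    · linear_combination (-(u 0 * u 1) / 2) * hs3
  have hg : gammaVec (bpv h) u
      = (Xᵀ * X)⁻¹ *ᵥ ((Xᵀ * X) *ᵥ ![(u 1 ^ 2 - u 0 ^ 2) / 2, u 0 * u 1, 0]) := by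
    rw [key]; rfl
  rw [hg, Matrix.mulVec_mulVec, Matrix.nonsing_inv_mul _ (isUnit_iff_ne_zero.2 hdet),
    Matrix.one_mulVec]
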